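/- A subcomplex Ω ⊆ Kⁿ is n-Farber if and only if the restrictions of all n projections to Ω are pairwise in the same contiguity class: (pᵢ)|_Ω ∼ (pⱼ)|_Ω for all i, j ∈ {1,...,n}. -/

import Mathlib

/-- An abstract simplicial complex on vertex type `V`. -/
structure ASC (V : Type) where
  faces : Set (Finset V)
  nonempty_of_mem : ∀ {s : Finset V}, s ∈ faces → s.Nonempty
  down_closed : ∀ {s t : Finset V}, s ∈ faces → t ⊆ s → t.Nonempty → t ∈ faces

/-- A simplicial map between abstract simplicial complexes. -/
structure SMap {V W : Type} [DecidableEq W] (K : ASC V) (L : ASC W) where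
  toFun : V → W
  maps_faces : ∀ {s : Finset V}, s ∈ K.faces → s.image toFun ∈ L.faces

namespace SMap

variable {V W U : Type} [DecidableEq V] [DecidableEq W] [DecidableEq U]
  {K : ASC V} {L : ASC W} {M : ASC U}

/-- The identity simplicial map. -/
def id (K : ASC V) : SMap K K :=
  ⟨fun v => v, by intro s hs; simpa using hs⟩

/-- Composition of simplicial maps. -/
def comp (ψ : SMap L M) (φ : SMap K L) : SMap K M :=
  ⟨ψ.toFun ∘ φ.toFun, by
    intro s hs
    have h := ψ.maps_faces (φ.maps_faces hs)
    simpa [Finset.image_image] using h⟩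

end SMap

/-- Two simplicial maps are contiguous if the images of each simplex under the two
maps together span a simplex. -/
def Contiguous {V W : Type} [DecidableEq W] {K : ASC V} {L : ASC W}
    (φ ψ : SMap K L) : Prop :=
  ∀ {s : Finset V}, s ∈ K.faces → (s.image φ.toFun ∪ s.image ψ.toFun) ∈ L.faces

/-- Being in the same contiguity class: the reflexive-transitive closure of
contiguity (`φ ∼ ψ`). -/
def CClass {V W : Type} [DecidableEq W] {K : ASC V} {L : ASC W}
    (φ ψ : SMap K L) : Prop :=
  Relation.ReflTransGen Contiguous φ ψ

/-- The type of subcomplexes of `K`. -/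
def ASC.Sub {V : Type} (K : ASC V) : Type :=
  {Ω : ASC V // Ω.faces ⊆ K.faces}

/-- Restriction of a simplicial map to a subcomplex of the domain. -/
def SMap.restrict {V W : Type} [DecidableEq W] {K : ASC V} {L : ASC W}
    (φ : SMap K L) (Ω : K.Sub) : SMap Ω.1 L :=
  ⟨φ.toFun, by intro s hs; exact φ.maps_faces (Ω.2 hs)⟩

/-- `SDle φ k` : the family `φ` has contiguity distance at most `k`, witnessed by a
cover of `K` by `k+1` subcomplexes on each of which all the maps restrict into a
single contiguity class. -/
def SDle {V W : Type} [DecidableEq W] {K : ASC V} {L : ASC W} {n : ℕ}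
    (φ : Fin n → SMap K L) (k : ℕ) : Prop :=
  ∃ Ω : Fin (k + 1) → K.Sub,
    (∀ s ∈ K.faces, ∃ j, s ∈ (Ω j).1.faces) ∧
    ∀ j i i', CClass ((φ i).restrict (Ω j)) ((φ i').restrict (Ω j))

/-- The `n`-th contiguity distance `SD(φ₁,…,φₙ)`, valued in `ℕ∞`. -/
noncomputable def SD {V W : Type} [DecidableEq W] {K : ASC V} {L : ASC W} {n : ℕ}
    (φ : Fin n → SMap K L) : ℕ∞ :=
  sInf {m : ℕ∞ | ∃ k : ℕ, m = (k : ℕ∞) ∧ SDle φ k}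

/-- `v` is a vertex of `K`. -/
def ASC.isVertex {V : Type} (K : ASC V) (v : V) : Prop :=
  ({v} : Finset V) ∈ K.faces

/-- The constant simplicial map at a vertex `v` of `L`. -/
def constMap {V W : Type} [DecidableEq W] (K : ASC V) (L : ASC W) {v : W}
    (hv : L.isVertex v) : SMap K L :=
  ⟨fun _ => v, by
    intro s hs
    rw [Finset.image_const (K.nonempty_of_mem hs) v]
    exact hv⟩

/-- The inclusion of a subcomplex. -/
def incl {V : Type} [DecidableEq V] {K : ASC V} (Ω : K.Sub) : SMap Ω.1 K :=
  ⟨fun x => x, by intro s hs; simpa using Ω.2 hs⟩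

/-- A subcomplex is categorical if its inclusion is in the same contiguity class
as a constant map. -/
def Categorical {V : Type} [DecidableEq V] {K : ASC V} (Ω : K.Sub) : Prop :=
  ∃ v : V, ∃ hv : K.isVertex v, CClass (incl Ω) (constMap Ω.1 K hv)

/-- `scatle K k` : `K` is covered by `k+1` categorical subcomplexes. -/
def scatle {V : Type} [DecidableEq V] (K : ASC V) (k : ℕ) : Prop :=
  ∃ Ω : Fin (k + 1) → K.Sub,
    (∀ s ∈ K.faces, ∃ j, s ∈ (Ω j).1.faces) ∧ ∀ j, Categorical (Ω j)

/-- The simplicial Lusternik–Schnirelmann category, valued in `ℕ∞`. -/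
noncomputable def scat {V : Type} [DecidableEq V] (K : ASC V) : ℕ∞ :=
  sInf {m : ℕ∞ | ∃ k : ℕ, m = (k : ℕ∞) ∧ scatle K k}

/-- The `n`-fold categorical product `Kⁿ`. -/
def ASC.prodPow {V : Type} [DecidableEq V] (K : ASC V) (n : ℕ) : ASC (Fin n → V) where
  faces := {s | s.Nonempty ∧ ∀ i : Fin n, s.image (fun f => f i) ∈ K.faces}
  nonempty_of_mem := fun h => h.1
  down_closed := by
    intro s t hs hts ht
    refine ⟨ht, fun i => ?_⟩
    exact K.down_closed (hs.2 i) (Finset.image_subset_image (f := fun f => f i) hts)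
      (ht.image _)

/-- Projection to the `i`-th factor of the categorical product. -/
def proj {V : Type} [DecidableEq V] (K : ASC V) (n : ℕ) (i : Fin n) :
    SMap (K.prodPow n) K :=
  ⟨fun f => f i, by intro s hs; exact hs.2 i⟩

/-- The diagonal simplicial map `K → Kⁿ`. -/
def diag {V : Type} [DecidableEq V] (K : ASC V) (n : ℕ) : SMap K (K.prodPow n) :=
  ⟨fun v _ => v, by
    intro s hs
    refine ⟨(K.nonempty_of_mem hs).image _, fun i => ?_⟩
    have h : (s.image fun v (_ : Fin n) => v).image (fun f => f i) = s := by
      rw [Finset.image_image]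
      exact Finset.image_id'
    rw [h]; exact hs⟩

/-- A subcomplex `Ω ⊆ Kⁿ` is `n`-Farber if the diagonal admits a section over `Ω`
up to contiguity class. -/
def IsFarber {V : Type} [DecidableEq V] {K : ASC V} {n : ℕ}
    (Ω : (K.prodPow n).Sub) : Prop :=
  ∃ σ : SMap Ω.1 K, CClass ((diag K n).comp σ) (incl Ω)

/-- `dTCle K n k` : `Kⁿ` is covered by `k+1` `n`-Farber subcomplexes. -/
def dTCle {V : Type} [DecidableEq V] (K : ASC V) (n k : ℕ) : Prop :=
  ∃ Ω : Fin (k + 1) → (K.prodPow n).Sub,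
    (∀ s ∈ (K.prodPow n).faces, ∃ j, s ∈ (Ω j).1.faces) ∧ ∀ j, IsFarber (Ω j)

/-- The `n`-th discrete topological complexity, valued in `ℕ∞`. -/
noncomputable def dTC {V : Type} [DecidableEq V] (K : ASC V) (n : ℕ) : ℕ∞ :=
  sInf {m : ℕ∞ | ∃ k : ℕ, m = (k : ℕ∞) ∧ dTCle K n k}

/-- `K` is edge-path connected: any two vertices are joined by a finite edge path. -/
def ASC.EPConn {V : Type} [DecidableEq V] (K : ASC V) : Prop :=
  ∀ u v : V, K.isVertex u → K.isVertex v →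
    Relation.ReflTransGen (fun a b => ({a, b} : Finset V) ∈ K.faces) u v

/-- `K` is strongly collapsible: the identity is in the same contiguity class as a
constant map. -/
def StronglyCollapsible {V : Type} [DecidableEq V] (K : ASC V) : Prop :=
  ∃ v : V, ∃ hv : K.isVertex v, CClass (SMap.id K) (constMap K K hv)

/-- `μ` is a right strong equivalence: it has a right strong homotopy inverse. -/
def RightStrongEq {V W : Type} [DecidableEq V] [DecidableEq W]
    {K : ASC V} {L : ASC W} (μ : SMap K L) : Prop :=
  ∃ α : SMap L K, CClass (μ.comp α) (SMap.id L)

/-- `μ` is a left strong equivalence: it has a left strong homotopy inverse. -/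
def LeftStrongEq {V W : Type} [DecidableEq V] [DecidableEq W]
    {K : ASC V} {L : ASC W} (μ : SMap K L) : Prop :=
  ∃ β : SMap L K, CClass (β.comp μ) (SMap.id K)

/-- The barycentric subdivision of `K`: vertices are the simplices of `K`, and
simplices are chains of simplices of `K`. -/
def ASC.sd {V : Type} (K : ASC V) : ASC (Finset V) where
  faces := {S | S.Nonempty ∧ (∀ σ ∈ S, σ ∈ K.faces) ∧
    ∀ σ ∈ S, ∀ τ ∈ S, σ ⊆ τ ∨ τ ⊆ σ}
  nonempty_of_mem := fun h => h.1
  down_closed := fun hS hTS hT =>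
    ⟨hT, fun σ hσ => hS.2.1 σ (hTS hσ), fun σ hσ τ hτ => hS.2.2 σ (hTS hσ) τ (hTS hτ)⟩

/-- The induced simplicial map on barycentric subdivisions. -/
def SMap.sd {V W : Type} [DecidableEq V] [DecidableEq W] {K : ASC V} {L : ASC W}
    (φ : SMap K L) : SMap K.sd L.sd :=
  ⟨fun σ => σ.image φ.toFun, by
    intro S hS
    refine ⟨hS.1.image _, ?_, ?_⟩
    · intro τ hτ
      simp only [Finset.mem_image] at hτ
      obtain ⟨σ, hσ, rfl⟩ := hτ
      exact φ.maps_faces (hS.2.1 σ hσ)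
    · intro τ₁ h₁ τ₂ h₂
      simp only [Finset.mem_image] at h₁ h₂
      obtain ⟨σ₁, hσ₁, rfl⟩ := h₁
      obtain ⟨σ₂, hσ₂, rfl⟩ := h₂
      rcases hS.2.2 σ₁ hσ₁ σ₂ hσ₂ with h | h
      · exact Or.inl (Finset.image_subset_image h)
      · exact Or.inr (Finset.image_subset_image h)⟩


section Aux

variable {U V W : Type} [DecidableEq U] [DecidableEq V] [DecidableEq W]
  {J : ASC U} {K : ASC V} {M : ASC W}

lemma smap_ext {φ ψ : SMap J K} (h : φ.toFun = ψ.toFun) : φ = ψ := by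
  cases φ; cases ψ; simpa using h

lemma contig_rfl (φ : SMap J K) : Contiguous φ φ := by
  intro s hs
  simpa [Finset.union_self] using φ.maps_faces hs

lemma contig_symm {φ ψ : SMap J K} (h : Contiguous φ ψ) : Contiguous ψ φ := by
  intro s hs
  rw [Finset.union_comm]
  exact h hs

lemma cclass_symm {φ ψ : SMap J K} (h : CClass φ ψ) : CClass ψ φ :=
  letI : Std.Symm (@Contiguous U V _ J K) := ⟨fun _ _ => contig_symm⟩
  (Std.Symm.symm (r := Relation.ReflTransGen (@Contiguous U V _ J K)) _ _ h :)

lemma cclass_comp_left (μ : SMap K M) {φ ψ : SMap J K} (h : CClass φ ψ) :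
    CClass (μ.comp φ) (μ.comp ψ) := by
  induction h with
  | refl => exact Relation.ReflTransGen.refl
  | tail _ hbc ih =>
    refine ih.tail ?_
    intro s hs
    have := μ.maps_faces (hbc hs)
    simpa [Finset.image_union, Finset.image_image, SMap.comp] using this

/-- The tuple of a family of simplicial maps into `K`, as a map into `Kⁿ`. -/
def tupleMap {n : ℕ} (f : Fin n → SMap J K) : SMap J (K.prodPow n) :=
  ⟨fun x i => (f i).toFun x, by
    intro s hs
    refine ⟨(J.nonempty_of_mem hs).image _, fun i => ?_⟩
    rw [Finset.image_image]
    exact (f i).maps_faces hs⟩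

lemma contig_tuple {n : ℕ} {f g : Fin n → SMap J K}
    (h : ∀ i, Contiguous (f i) (g i)) : Contiguous (tupleMap f) (tupleMap g) := by
  intro s hs
  refine ⟨Finset.Nonempty.inl ((J.nonempty_of_mem hs).image _), fun i => ?_⟩
  have := h i hs
  simpa [Finset.image_union, Finset.image_image, tupleMap, Function.comp_def] using this

lemma cclass_tuple_update {n : ℕ} (f : Fin n → SMap J K) (i : Fin n)
    {a b : SMap J K} (h : CClass a b) :
    CClass (tupleMap (Function.update f i a)) (tupleMap (Function.update f i b)) := by
  induction h with
  | refl => exact Relation.ReflTransGen.refl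
  | tail _ hbc ih =>
    refine ih.tail (contig_tuple fun j => ?_)
    by_cases hj : j = i
    · subst hj; simpa using hbc
    · simp only [Function.update_of_ne hj]
      exact contig_rfl _

lemma cclass_tuple {n : ℕ} {f g : Fin n → SMap J K}
    (h : ∀ i, CClass (f i) (g i)) : CClass (tupleMap f) (tupleMap g) := by
  -- iterate coordinate by coordinate
  have key : ∀ m : ℕ, m ≤ n →
      CClass (tupleMap f) (tupleMap fun i => if i.1 < m then g i else f i) := by
    intro m
    induction m with
    | zero => intro _; simp only [Nat.not_lt_zero, if_false]; exact Relation.ReflTransGen.refl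
    | succ m ih =>
      intro hm
      have hmn : m < n := hm
      refine (ih hmn.le).trans ?_
      have := cclass_tuple_update (fun i => if i.1 < m then g i else f i) ⟨m, hmn⟩
        (h ⟨m, hmn⟩)
      have e1 : Function.update (fun i : Fin n => if i.1 < m then g i else f i)
          ⟨m, hmn⟩ (f ⟨m, hmn⟩) = fun i => if i.1 < m then g i else f i := by
        funext j
        by_cases hj : j = ⟨m, hmn⟩
        · subst hj; simp
        · simp [Function.update_of_ne hj]
      have e2 : Function.update (fun i : Fin n => if i.1 < m then g i else f i)
          ⟨m, hmn⟩ (g ⟨m, hmn⟩) = fun i => if i.1 < m + 1 then g i else f i := by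
        funext j
        by_cases hj : j = ⟨m, hmn⟩
        · subst hj; simp
        · have hjm : j.1 ≠ m := fun hh => hj (Fin.ext hh)
          have : j.1 < m + 1 ↔ j.1 < m := by omega
          simp [Function.update_of_ne hj, this]
      rw [e1, e2] at this
      exact this
  have := key n le_rfl
  have e : (fun i : Fin n => if i.1 < n then g i else f i) = g := by
    funext i; simp [i.2]
  rwa [e] at this

end Aux

/-- `Ω ⊆ Kⁿ` is `n`-Farber iff all restricted projections are in
the same contiguity class. -/
theorem isFarber_iff {V : Type} [DecidableEq V] {K : ASC V} {n : ℕ}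
    (hn : 1 ≤ n) (Ω : (K.prodPow n).Sub) :
    IsFarber Ω ↔
      ∀ i j, CClass ((proj K n i).restrict Ω) ((proj K n j).restrict Ω) := by
  constructor
  · rintro ⟨σ, hσ⟩ i j
    have key : ∀ i : Fin n, CClass σ ((proj K n i).restrict Ω) := by
      intro i
      have h := cclass_comp_left (proj K n i) hσ
      have e1 : (proj K n i).comp ((diag K n).comp σ) = σ := smap_ext rfl
      have e2 : (proj K n i).comp (incl Ω) = (proj K n i).restrict Ω := smap_ext rfl
      rwa [e1, e2] at h
    exact (cclass_symm (key i)).trans (key j)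
  · intro h
    set i0 : Fin n := ⟨0, hn⟩
    refine ⟨(proj K n i0).restrict Ω, ?_⟩
    have e1 : (diag K n).comp ((proj K n i0).restrict Ω) =
        tupleMap (fun _ : Fin n => (proj K n i0).restrict Ω) := smap_ext rfl
    have e2 : incl Ω = tupleMap (fun i : Fin n => (proj K n i).restrict Ω) :=
      smap_ext rfl
    rw [e1, e2]
    exact cclass_tuple fun i => h i0 i
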